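/- Let 1 < p < 2. Suppose g : Ω → ℝ is measurable with g ∈ 𝕃_0^{p,∞} and g − g∘T ∈ 𝕃_0^{p/(p-1),∞}. Then n^{-1/2} · max_{1 ≤ k ≤ n} |g ∘ T^k| converges to 0 in probability (in μ-measure) as n → ∞. (This is condition (1.6) of the equivalence theorem, so for any square-integrable martingale differences sequence (m∘T^i) the function f := m + g − g∘T satisfies the weak invariance principle.) -/

import Mathlib

open MeasureTheory Filter Topology Set
open scoped ENNReal NNReal

noncomputable section

/-- Deterministic chaining lemma. -/
lemma det_aux (f : ℕ → ℝ) (tt M : ℝ) (hM : 0 ≤ M) (n D k : ℕ)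
    (hkn : k ≤ n)
    (h0 : |f 0| ≤ tt)
    (hcard : ((Finset.range (n+1)).filter (fun j => tt < |f j|)).card ≤ D)
    (hsum : ∑ i ∈ Finset.range n, max (|f i - f (i+1)| - M) 0 ≤ tt) :
    |f k| ≤ 2*tt + D*M := by
  obtain ⟨j, hjk, hjD, hgood⟩ : ∃ j, j ≤ k ∧ k - j ≤ D ∧ |f j| ≤ tt := by
    by_cases hkD : k ≤ D
    · exact ⟨0, Nat.zero_le _, by omega, h0⟩
    · push_neg at hkD
      by_contra hcon
      push_neg at hcon
      have hsub : Finset.Icc (k-D) k ⊆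
          (Finset.range (n+1)).filter (fun j => tt < |f j|) := by
        intro j hj
        rw [Finset.mem_Icc] at hj
        rw [Finset.mem_filter, Finset.mem_range]
        exact ⟨by omega, hcon j hj.2 (by omega)⟩
      have := Finset.card_le_card hsub
      rw [Nat.card_Icc] at this
      omega
  have tele : f j - f k = ∑ i ∈ Finset.Ico j k, (f i - f (i+1)) := by
    rw [Finset.sum_Ico_eq_sum_range]
    have h1 := Finset.sum_range_sub' (fun i => f (j+i)) (k-j)
    simp only [Nat.add_zero] at h1
    rw [show j + (k - j) = k by omega] at h1
    rw [← h1]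
    exact Finset.sum_congr rfl fun i _ => by rw [add_assoc]
  have step : ∀ i, |f i - f (i+1)| ≤ M + max (|f i - f (i+1)| - M) 0 := by
    intro i
    have := le_max_left (|f i - f (i+1)| - M) (0:ℝ)
    linarith
  have habs : |f k| ≤ |f j| + |f j - f k| := by
    have h1 := abs_sub_abs_le_abs_sub (f k) (f j)
    have h2 : |f k - f j| = |f j - f k| := abs_sub_comm _ _
    linarith
  have hsum2 : |f j - f k| ≤ (k - j : ℕ) * M + tt := by
    rw [tele]
    calc |∑ i ∈ Finset.Ico j k, (f i - f (i+1))|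
        ≤ ∑ i ∈ Finset.Ico j k, |f i - f (i+1)| := Finset.abs_sum_le_sum_abs _ _
      _ ≤ ∑ i ∈ Finset.Ico j k, (M + max (|f i - f (i+1)| - M) 0) :=
          Finset.sum_le_sum fun i _ => step i
      _ = (k - j : ℕ) * M + ∑ i ∈ Finset.Ico j k, max (|f i - f (i+1)| - M) 0 := by
          rw [Finset.sum_add_distrib, Finset.sum_const, Nat.card_Ico, nsmul_eq_mul]
      _ ≤ (k - j : ℕ) * M + tt := by
          gcongr
          refine le_trans (Finset.sum_le_sum_of_subset_of_nonneg ?_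
            (fun i _ _ => le_max_right _ _)) hsum
          intro i hi
          rw [Finset.mem_Ico] at hi
          rw [Finset.mem_range]
          omega
  have hDM : ((k - j : ℕ) : ℝ) * M ≤ (D : ℝ) * M := by
    have : ((k - j : ℕ) : ℝ) ≤ (D : ℝ) := by exact_mod_cast hjD
    exact mul_le_mul_of_nonneg_right this hM
  linarith

/-- If `b → 0` at infinity and `M → ∞`, the tail sup of `b` beyond `M n` tends to `0`. -/
lemma sup_tail_tendsto {b : ℝ → ℝ≥0∞} (hb : Tendsto b atTop (𝓝 0)) {M : ℕ → ℝ}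
    (hM : Tendsto M atTop atTop) :
    Tendsto (fun n => ⨆ (s : ℝ) (_ : M n ≤ s), b s) atTop (𝓝 0) := by
  rw [ENNReal.tendsto_nhds_zero]
  intro η hη
  obtain ⟨U, hU⟩ := eventually_atTop.1 (ENNReal.tendsto_nhds_zero.1 hb η hη)
  filter_upwards [hM.eventually_ge_atTop U] with n hn
  exact iSup₂_le fun s hs => hU s (le_trans hn hs)

/-- Tail integral bound: `∫_0^∞ (M+s)^(-q) ds ≤ M^(1-q) * q/(q-1)`. -/
lemma tail_lintegral {q M : ℝ} (hq : 1 < q) (hM : 0 < M) :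
    ∫⁻ s in Ioi (0:ℝ), ENNReal.ofReal ((M + s) ^ (-q)) ≤
      ENNReal.ofReal (M ^ (1 - q) * (q / (q - 1))) := by
  have hsplit : Ioi (0:ℝ) = Ioc 0 M ∪ Ioi M := (Ioc_union_Ioi_eq_Ioi hM.le).symm
  rw [hsplit, lintegral_union measurableSet_Ioi (Ioc_disjoint_Ioi le_rfl)]
  have part1 : ∫⁻ s in Ioc (0:ℝ) M, ENNReal.ofReal ((M + s) ^ (-q)) ≤
      ENNReal.ofReal (M ^ (1 - q)) := by
    have hb : ∀ s ∈ Ioc (0:ℝ) M, ENNReal.ofReal ((M + s) ^ (-q)) ≤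
        ENNReal.ofReal (M ^ (-q)) := by
      intro s hs
      apply ENNReal.ofReal_le_ofReal
      rw [Real.rpow_neg (by linarith [hs.1] : (0:ℝ) ≤ M + s), Real.rpow_neg hM.le]
      exact inv_anti₀ (Real.rpow_pos_of_pos hM q)
        (Real.rpow_le_rpow hM.le (by linarith [hs.1]) (by linarith))
    calc ∫⁻ s in Ioc (0:ℝ) M, ENNReal.ofReal ((M + s) ^ (-q))
        ≤ ∫⁻ _ in Ioc (0:ℝ) M, ENNReal.ofReal (M ^ (-q)) :=
          setLIntegral_mono' measurableSet_Ioc hb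
      _ = ENNReal.ofReal (M ^ (-q)) * volume (Ioc (0:ℝ) M) := setLIntegral_const _ _
      _ = ENNReal.ofReal (M ^ (-q)) * ENNReal.ofReal M := by rw [Real.volume_Ioc, sub_zero]
      _ = ENNReal.ofReal (M ^ (-q) * M) := by
          rw [ENNReal.ofReal_mul (Real.rpow_nonneg hM.le _)]
      _ = ENNReal.ofReal (M ^ (1 - q)) := by
          congr 1
          rw [show (1 : ℝ) - q = -q + 1 by ring, Real.rpow_add hM, Real.rpow_one]
  have part2 : ∫⁻ s in Ioi M, ENNReal.ofReal ((M + s) ^ (-q)) ≤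
      ENNReal.ofReal (M ^ (1 - q) / (q - 1)) := by
    have hb : ∀ s ∈ Ioi M, ENNReal.ofReal ((M + s) ^ (-q)) ≤
        ENNReal.ofReal (s ^ (-q)) := by
      intro s hs
      simp only [mem_Ioi] at hs
      apply ENNReal.ofReal_le_ofReal
      rw [Real.rpow_neg (by linarith : (0:ℝ) ≤ M + s), Real.rpow_neg (by linarith : (0:ℝ) ≤ s)]
      exact inv_anti₀ (Real.rpow_pos_of_pos (by linarith) q)
        (Real.rpow_le_rpow (by linarith) (by linarith) (by linarith))
    have hint : ∫⁻ s in Ioi M, ENNReal.ofReal (s ^ (-q)) =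
        ENNReal.ofReal (M ^ (1 - q) / (q - 1)) := by
      rw [← ofReal_integral_eq_lintegral_ofReal
        (integrableOn_Ioi_rpow_of_lt (by linarith) hM)
        ((ae_restrict_iff' measurableSet_Ioi).2 (ae_of_all _ fun x hx =>
          Real.rpow_nonneg (le_of_lt (hM.trans hx)) _))]
      rw [integral_Ioi_rpow_of_lt (by linarith) hM]
      congr 1
      rw [show -q + 1 = 1 - q by ring, div_eq_div_iff (by linarith : (1:ℝ) - q ≠ 0)
        (by linarith : q - 1 ≠ 0)]
      ring
    calc ∫⁻ s in Ioi M, ENNReal.ofReal ((M + s) ^ (-q))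
        ≤ ∫⁻ s in Ioi M, ENNReal.ofReal (s ^ (-q)) :=
          setLIntegral_mono' measurableSet_Ioi hb
      _ = ENNReal.ofReal (M ^ (1 - q) / (q - 1)) := hint
  calc _ ≤ ENNReal.ofReal (M ^ (1 - q)) + ENNReal.ofReal (M ^ (1 - q) / (q - 1)) :=
        add_le_add part1 part2
    _ = ENNReal.ofReal (M ^ (1 - q) + M ^ (1 - q) / (q - 1)) :=
        (ENNReal.ofReal_add (Real.rpow_nonneg hM.le _)
          (div_nonneg (Real.rpow_nonneg hM.le _) (by linarith))).symm
    _ = ENNReal.ofReal (M ^ (1 - q) * (q / (q - 1))) := by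
        congr 1
        have hq1 : q - 1 ≠ 0 := by linarith
        field_simp
        ring

/-- Birkhoff sums `S_n(f) = ∑_{j=0}^{n-1} f ∘ T^j`. -/
def partialSumT {Ω : Type*} (T : Ω → Ω) (f : Ω → ℝ) (n : ℕ) (ω : Ω) : ℝ :=
  ∑ j ∈ Finset.range n, f (T^[j] ω)

/-- **Theorem 2.1 (key conclusion)**: if `1 < p < 2`, `g ∈ 𝕃₀^{p,∞}` and
`g - g∘T ∈ 𝕃₀^{p/(p-1),∞}`, then `n^{-1/2} max_{1 ≤ k ≤ n} |g ∘ T^k| → 0` in probability. -/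
theorem stmt0 {Ω : Type*} [MeasurableSpace Ω] (μ : Measure Ω) [IsProbabilityMeasure μ]
    (T : Ω ≃ᵐ Ω) (hT : MeasurePreserving (⇑T) μ μ)
    (p : ℝ) (hp1 : 1 < p) (hp2 : p < 2)
    (g : Ω → ℝ) (hg : Measurable g)
    (hgweak : Tendsto (fun t : ℝ => ENNReal.ofReal (t ^ p) * μ {ω | t < |g ω|})
      atTop (𝓝 0))
    (hcobweak : Tendsto
      (fun t : ℝ => ENNReal.ofReal (t ^ (p / (p - 1))) * μ {ω | t < |g ω - g (T ω)|})
      atTop (𝓝 0)) :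
    ∀ ε : ℝ, 0 < ε →
      Tendsto (fun n : ℕ =>
          μ {ω | ε ≤ ((((Finset.Icc 1 n).sup fun k => ‖g ((⇑T)^[k] ω)‖₊ : ℝ≥0)) : ℝ)
            / Real.sqrt n})
        atTop (𝓝 0) := by
  intro ε hε
  have hp0 : (0:ℝ) < p - 1 := by linarith
  set q : ℝ := p / (p - 1) with hq_def
  have hq1 : 1 < q := by
    rw [hq_def, lt_div_iff₀ hp0]; linarith
  have hqp : q / (q - 1) = p := by
    rw [hq_def]; field_simp; ring
  have hpq1 : (p - 1) * (1 - q) = -1 := by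
    rw [hq_def]; field_simp; ring
  -- the coboundary function
  set h : Ω → ℝ := fun ω => g ω - g (T ω) with hh_def
  have hhm : Measurable h := hg.sub (hg.comp T.measurable)
  have hw : Tendsto (fun s : ℝ => ENNReal.ofReal (s ^ q) * μ {ω | s < |h ω|})
      atTop (𝓝 0) := hcobweak
  have hTm : ∀ j : ℕ, Measurable ((⇑T)^[j]) := fun j => T.measurable.iterate j
  -- basic numeric defs
  set t4 : ℕ → ℝ := fun n => ε / 4 * Real.sqrt n with ht4_def
  set M : ℕ → ℝ := fun n => Real.sqrt n ^ (p - 1) with hM_def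
  set D : ℕ → ℕ := fun n => ⌊ε / 4 * Real.sqrt n ^ (2 - p)⌋₊ with hD_def
  set C : ℕ → Set Ω := fun n => {ω | t4 n < |g ω|} with hC_def
  set Nf : ℕ → Ω → ℝ≥0∞ := fun n ω => ∑ j ∈ Finset.range (n+1),
    (if t4 n < |g ((⇑T)^[j] ω)| then (1:ℝ≥0∞) else 0) with hNf_def
  set A : ℕ → Set Ω := fun n => {ω | ((D n + 1 : ℕ) : ℝ≥0∞) ≤ Nf n ω} with hA_def
  set Sh : ℕ → Ω → ℝ≥0∞ := fun n ω => ∑ i ∈ Finset.range n,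
    ENNReal.ofReal (max (|h ((⇑T)^[i] ω)| - M n) 0) with hSh_def
  set B : ℕ → Set Ω := fun n => {ω | ENNReal.ofReal (t4 n) ≤ Sh n ω} with hB_def
  set a : ℕ → ℝ≥0∞ := fun n => ENNReal.ofReal (t4 n ^ p) * μ (C n) with ha_def
  set dl : ℕ → ℝ≥0∞ := fun n => ⨆ (s : ℝ) (_ : M n ≤ s),
    ENNReal.ofReal (s ^ q) * μ {ω | s < |h ω|} with hdl_def
  set K1 : ℝ≥0∞ := ENNReal.ofReal (2 * (4/ε) ^ (p+1)) with hK1_def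
  set K2 : ℝ≥0∞ := ENNReal.ofReal (4 * p / ε) with hK2_def
  have hCmeas : ∀ n, MeasurableSet (C n) := fun n =>
    measurableSet_lt measurable_const hg.abs
  -- basic numeric facts for n ≥ 1
  have hsqrt1 : ∀ n : ℕ, 1 ≤ n → (1:ℝ) ≤ Real.sqrt n := by
    intro n hn
    rw [show (1:ℝ) = Real.sqrt 1 by simp]
    exact Real.sqrt_le_sqrt (by exact_mod_cast hn)
  have hsqrt0 : ∀ n : ℕ, 1 ≤ n → (0:ℝ) < Real.sqrt n := fun n hn =>
    lt_of_lt_of_le one_pos (hsqrt1 n hn)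
  have hM0 : ∀ n : ℕ, 1 ≤ n → (0:ℝ) < M n := fun n hn =>
    Real.rpow_pos_of_pos (hsqrt0 n hn) _
  have ht40 : ∀ n : ℕ, 1 ≤ n → (0:ℝ) < t4 n := fun n hn => by
    have := hsqrt0 n hn
    rw [ht4_def]
    positivity
  -- tendsto of t4 and M
  have hsqrt_top : Tendsto (fun n : ℕ => Real.sqrt n) atTop atTop := by
    have h2 : Tendsto (fun x : ℝ => x ^ ((1:ℝ)/2)) atTop atTop :=
      tendsto_rpow_atTop (by norm_num)
    have h3 : Tendsto (fun n : ℕ => (n:ℝ)) atTop atTop := tendsto_natCast_atTop_atTop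
    have := h2.comp h3
    refine Tendsto.congr (fun n => ?_) this
    exact (Real.sqrt_eq_rpow _).symm
  have ht4top : Tendsto t4 atTop atTop := by
    rw [ht4_def]
    exact (tendsto_const_mul_atTop_of_pos (by positivity)).2 hsqrt_top
  have hMtop : Tendsto M atTop atTop := by
    rw [hM_def]
    exact (tendsto_rpow_atTop hp0).comp hsqrt_top
  -- limits of the two majorant sequences
  have htendA : Tendsto a atTop (𝓝 0) := hgweak.comp ht4top
  have htendD : Tendsto dl atTop (𝓝 0) := sup_tail_tendsto hw hMtop
  -- bound for μ (C n)
  have hC_bound : ∀ᶠ n in atTop, μ (C n) ≤ a n := by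
    filter_upwards [ht4top.eventually_ge_atTop 1] with n hn
    have h1 : (1:ℝ≥0∞) ≤ ENNReal.ofReal (t4 n ^ p) := by
      rw [ENNReal.one_le_ofReal]
      calc (1:ℝ) = t4 n ^ (0:ℝ) := (Real.rpow_zero _).symm
        _ ≤ t4 n ^ p := Real.rpow_le_rpow_of_exponent_le hn (by linarith)
    calc μ (C n) = 1 * μ (C n) := (one_mul _).symm
      _ ≤ ENNReal.ofReal (t4 n ^ p) * μ (C n) := mul_le_mul_left h1 _
      _ = a n := rfl
  -- bound for μ (A n)
  have hA_bound : ∀ n : ℕ, 1 ≤ n → μ (A n) ≤ K1 * a n := by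
    intro n hn1
    have hmeasj : ∀ j : ℕ, Measurable
        (fun ω => if t4 n < |g ((⇑T)^[j] ω)| then (1:ℝ≥0∞) else 0) := by
      intro j
      have hm : Measurable (fun ω => g ((⇑T)^[j] ω)) := hg.comp (hTm j)
      exact Measurable.ite (measurableSet_lt measurable_const hm.abs) measurable_const
        measurable_const
    have hNmeas : Measurable (Nf n) := by
      rw [hNf_def]
      exact Finset.measurable_sum _ (fun j _ => hmeasj j)
    have markov := mul_meas_ge_le_lintegral₀ (μ := μ) hNmeas.aemeasurable ((D n + 1 : ℕ) : ℝ≥0∞)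
    have hlin : ∫⁻ ω, Nf n ω ∂μ = ((n+1 : ℕ) : ℝ≥0∞) * μ (C n) := by
      rw [hNf_def]
      rw [lintegral_finset_sum _ (fun j _ => hmeasj j)]
      have heach : ∀ j ∈ Finset.range (n+1),
          ∫⁻ ω, (if t4 n < |g ((⇑T)^[j] ω)| then (1:ℝ≥0∞) else 0) ∂μ = μ (C n) := by
        intro j _
        have hps : MeasurableSet ((⇑T)^[j] ⁻¹' (C n)) := (hTm j) (hCmeas n)
        have heqf : (fun ω => if t4 n < |g ((⇑T)^[j] ω)| then (1:ℝ≥0∞) else 0)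
            = fun ω => ((⇑T)^[j] ⁻¹' (C n)).indicator (1 : Ω → ℝ≥0∞) ω := by
          funext ω
          simp [Set.indicator_apply, hC_def, Set.mem_preimage, Set.mem_setOf_eq]
        rw [heqf, lintegral_indicator_one hps,
          (hT.iterate j).measure_preimage (hCmeas n).nullMeasurableSet]
      rw [Finset.sum_congr rfl heach, Finset.sum_const, Finset.card_range, nsmul_eq_mul]
    have hDne : ((D n + 1 : ℕ) : ℝ≥0∞) ≠ 0 := by
      exact_mod_cast Nat.succ_ne_zero (D n)
    have hDnetop : ((D n + 1 : ℕ) : ℝ≥0∞) ≠ ∞ := ENNReal.natCast_ne_top _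
    have step1 : μ (A n) ≤ ((n+1:ℕ) : ℝ≥0∞) * μ (C n) / ((D n + 1 : ℕ) : ℝ≥0∞) := by
      rw [ENNReal.le_div_iff_mul_le (Or.inl hDne) (Or.inl hDnetop)]
      calc μ (A n) * ((D n + 1:ℕ):ℝ≥0∞) = ((D n + 1:ℕ):ℝ≥0∞) * μ (A n) := mul_comm _ _
        _ ≤ ∫⁻ ω, Nf n ω ∂μ := markov
        _ = ((n+1:ℕ) : ℝ≥0∞) * μ (C n) := hlin
    have scalar : ((n+1:ℕ):ℝ≥0∞) ≤ (K1 * ENNReal.ofReal (t4 n ^ p)) *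
        ((D n + 1:ℕ):ℝ≥0∞) := by
      rw [hK1_def, ← ENNReal.ofReal_natCast (n+1), ← ENNReal.ofReal_natCast (D n + 1),
        ← ENNReal.ofReal_mul (by positivity), ← ENNReal.ofReal_mul (by positivity)]
      apply ENNReal.ofReal_le_ofReal
      push_cast
      have hfl : ε/4 * Real.sqrt n ^ (2-p) ≤ (D n:ℝ) + 1 := by
        rw [hD_def]
        exact le_of_lt (Nat.lt_floor_add_one _)
      have hr0 := hsqrt0 n hn1
      have hX : t4 n ^ p = (ε/4)^p * Real.sqrt n ^ p := by
        rw [ht4_def, Real.mul_rpow (by positivity) (Real.sqrt_nonneg _)]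
      have hXY : Real.sqrt n ^ p * Real.sqrt n ^ (2-p) = (n:ℝ) := by
        rw [← Real.rpow_add hr0, show p + (2-p) = (2:ℝ) by ring]
        rw [show ((2:ℝ) = ((2:ℕ):ℝ)) by norm_num, Real.rpow_natCast]
        exact Real.sq_sqrt (by positivity)
      have hone : (4/ε)^(p+1) * (ε/4)^(p+1) = (1:ℝ) := by
        rw [← Real.mul_rpow (by positivity) (by positivity),
          show (4/ε) * (ε/4) = (1:ℝ) by field_simp, Real.one_rpow]
      have hsplit : (ε/4:ℝ)^(p+1) = (ε/4)^p * (ε/4) := by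
        rw [Real.rpow_add (by positivity), Real.rpow_one]
      have hn1' : (1:ℝ) ≤ (n:ℝ) := by exact_mod_cast hn1
      calc (n:ℝ) + 1 ≤ 2*(n:ℝ) := by linarith
        _ = 2 * ((4/ε)^(p+1) * (ε/4)^(p+1)) * (Real.sqrt n ^ p * Real.sqrt n ^ (2-p)) := by
            rw [hone, hXY]; try ring
        _ = (2*(4/ε)^(p+1) * ((ε/4)^p * Real.sqrt n ^ p)) * (ε/4 * Real.sqrt n ^ (2-p)) := by
            rw [hsplit]; try ring
        _ ≤ (2*(4/ε)^(p+1) * ((ε/4)^p * Real.sqrt n ^ p)) * ((D n:ℝ) + 1) := by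
            have hnn : (0:ℝ) ≤ 2*(4/ε)^(p+1) * ((ε/4)^p * Real.sqrt n ^ p) := by positivity
            exact mul_le_mul_of_nonneg_left hfl hnn
        _ = 2*(4/ε)^(p+1) * t4 n ^ p * ((D n:ℝ)+1) := by rw [hX]; try ring
    calc μ (A n) ≤ ((n+1:ℕ) : ℝ≥0∞) * μ (C n) / ((D n + 1 : ℕ) : ℝ≥0∞) := step1
      _ ≤ K1 * a n := by
        rw [ENNReal.div_le_iff_le_mul (Or.inl hDne) (Or.inl hDnetop)]
        calc ((n+1:ℕ) : ℝ≥0∞) * μ (C n)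
            ≤ ((K1 * ENNReal.ofReal (t4 n ^ p)) * ((D n + 1:ℕ):ℝ≥0∞)) * μ (C n) :=
              mul_le_mul_left scalar _
          _ = K1 * a n * ((D n + 1:ℕ):ℝ≥0∞) := by rw [ha_def]; ring
  -- bound for μ (B n)
  have hB_bound : ∀ n : ℕ, 1 ≤ n → μ (B n) ≤ K2 * dl n := by
    intro n hn1
    have hterm : ∀ i : ℕ, Measurable (fun ω =>
        ENNReal.ofReal (max (|h ((⇑T)^[i] ω)| - M n) 0)) := fun i =>
      (((hhm.comp (hTm i)).abs.sub measurable_const).max measurable_const).ennreal_ofReal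
    have hShmeas : Measurable (Sh n) := by
      rw [hSh_def]
      exact Finset.measurable_sum _ (fun i _ => hterm i)
    have markov := mul_meas_ge_le_lintegral₀ (μ := μ) hShmeas.aemeasurable (ENNReal.ofReal (t4 n))
    have hI_def : ∀ i : ℕ, ∫⁻ ω, ENNReal.ofReal (max (|h ((⇑T)^[i] ω)| - M n) 0) ∂μ
        = ∫⁻ ω, ENNReal.ofReal (max (|h ω| - M n) 0) ∂μ := fun i =>
      (hT.iterate i).lintegral_comp
        (((hhm.abs.sub measurable_const).max measurable_const).ennreal_ofReal)
    have hlin : ∫⁻ ω, Sh n ω ∂μ =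
        (n : ℝ≥0∞) * ∫⁻ ω, ENNReal.ofReal (max (|h ω| - M n) 0) ∂μ := by
      rw [hSh_def]
      rw [lintegral_finset_sum _ (fun i _ => hterm i)]
      rw [Finset.sum_congr rfl (fun i _ => hI_def i), Finset.sum_const,
        Finset.card_range, nsmul_eq_mul]
    have hI : ∫⁻ ω, ENNReal.ofReal (max (|h ω| - M n) 0) ∂μ ≤
        dl n * ENNReal.ofReal (M n ^ (1-q) * (q/(q-1))) := by
      have hnn : 0 ≤ᵐ[μ] fun ω => max (|h ω| - M n) 0 :=
        ae_of_all _ fun ω => le_max_right _ _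
      have hmble : AEMeasurable (fun ω => max (|h ω| - M n) 0) μ :=
        ((hhm.abs.sub measurable_const).max measurable_const).aemeasurable
      rw [lintegral_eq_lintegral_meas_lt μ hnn hmble]
      have hMn0 := hM0 n hn1
      calc ∫⁻ s in Ioi (0:ℝ), μ {ω | s < max (|h ω| - M n) 0}
          ≤ ∫⁻ s in Ioi (0:ℝ), dl n * ENNReal.ofReal ((M n + s)^(-q)) := by
            apply setLIntegral_mono'  measurableSet_Ioi
            intro s hs
            simp only [mem_Ioi] at hs
            have hset : {ω | s < max (|h ω| - M n) 0} = {ω | M n + s < |h ω|} := by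
              ext ω
              simp only [Set.mem_setOf_eq, lt_max_iff]
              constructor
              · rintro (h1 | h2)
                · linarith
                · linarith
              · intro h1; left; linarith
            rw [hset]
            have hMs : 0 < M n + s := by linarith
            have hne0 : ENNReal.ofReal ((M n + s)^q) ≠ 0 :=
              (ENNReal.ofReal_pos.2 (Real.rpow_pos_of_pos hMs q)).ne'
            have hnetop : ENNReal.ofReal ((M n + s)^q) ≠ ∞ := ENNReal.ofReal_ne_top
            have hwle : ENNReal.ofReal ((M n + s)^q) * μ {ω | M n + s < |h ω|} ≤ dl n := by
              rw [hdl_def]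
              exact le_iSup₂ (f := fun s (_ : M n ≤ s) =>
                ENNReal.ofReal (s ^ q) * μ {ω | s < |h ω|}) (M n + s)
                (le_add_of_nonneg_right hs.le)
            calc μ {ω | M n + s < |h ω|}
                = (ENNReal.ofReal ((M n + s)^q))⁻¹ *
                  (ENNReal.ofReal ((M n + s)^q) * μ {ω | M n + s < |h ω|}) := by
                  rw [← mul_assoc, ENNReal.inv_mul_cancel hne0 hnetop, one_mul]
              _ ≤ (ENNReal.ofReal ((M n + s)^q))⁻¹ * dl n := mul_le_mul_right hwle _
              _ = dl n * ENNReal.ofReal ((M n + s)^(-q)) := by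
                  rw [Real.rpow_neg hMs.le,
                    ENNReal.ofReal_inv_of_pos (Real.rpow_pos_of_pos hMs q), mul_comm]
        _ = dl n * ∫⁻ s in Ioi (0:ℝ), ENNReal.ofReal ((M n + s)^(-q)) := by
            have hmint : Measurable (fun s : ℝ => ENNReal.ofReal ((M n + s) ^ (-q))) := by
              apply Measurable.ennreal_ofReal
              exact (measurable_const.add measurable_id).pow measurable_const
            rw [lintegral_const_mul _ hmint]
        _ ≤ dl n * ENNReal.ofReal (M n ^ (1-q) * (q/(q-1))) :=
            mul_le_mul_right (tail_lintegral hq1 hMn0) _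
    have hcalc : (n:ℝ≥0∞) * ENNReal.ofReal (M n ^ (1-q) * (q/(q-1))) =
        ENNReal.ofReal (t4 n) * K2 := by
      rw [hK2_def, ← ENNReal.ofReal_natCast n, ← ENNReal.ofReal_mul (by positivity),
        ← ENNReal.ofReal_mul (le_of_lt (ht40 n hn1))]
      congr 1
      have hr0 := hsqrt0 n hn1
      have hMq : M n ^ (1-q) = (Real.sqrt n)⁻¹ := by
        show (Real.sqrt n ^ (p-1) : ℝ) ^ (1-q) = (Real.sqrt n)⁻¹
        rw [← Real.rpow_mul (Real.sqrt_nonneg _), hpq1, Real.rpow_neg_one]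
      have hrne : Real.sqrt n ≠ 0 := ne_of_gt hr0
      rw [hMq, hqp]
      show ((n:ℕ):ℝ) * ((Real.sqrt n)⁻¹ * p) = ε / 4 * Real.sqrt n * (4 * p / ε)
      have hns : ((n:ℕ):ℝ) = Real.sqrt n ^ 2 := (Real.sq_sqrt (by positivity)).symm
      have hns2 : ((n:ℕ):ℝ) = Real.sqrt n * Real.sqrt n :=
        (Real.mul_self_sqrt (by positivity)).symm
      field_simp
      linear_combination hns
    have final : ENNReal.ofReal (t4 n) * μ (B n) ≤
        ENNReal.ofReal (t4 n) * (K2 * dl n) := by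
      calc ENNReal.ofReal (t4 n) * μ (B n) ≤ ∫⁻ ω, Sh n ω ∂μ := markov
        _ = (n:ℝ≥0∞) * ∫⁻ ω, ENNReal.ofReal (max (|h ω| - M n) 0) ∂μ := hlin
        _ ≤ (n:ℝ≥0∞) * (dl n * ENNReal.ofReal (M n ^ (1-q) * (q/(q-1)))) :=
            mul_le_mul_right hI _
        _ = ((n:ℝ≥0∞) * ENNReal.ofReal (M n ^ (1-q) * (q/(q-1)))) * dl n := by ring
        _ = (ENNReal.ofReal (t4 n) * K2) * dl n := by rw [hcalc]
        _ = ENNReal.ofReal (t4 n) * (K2 * dl n) := by ring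
    exact (ENNReal.mul_le_mul_iff_right (ENNReal.ofReal_pos.2 (ht40 n hn1)).ne'
      ENNReal.ofReal_ne_top).1 final
  -- inclusion of the event in the three bad events
  have hE_sub : ∀ n : ℕ, 1 ≤ n →
      {ω | ε ≤ ((((Finset.Icc 1 n).sup fun k => ‖g ((⇑T)^[k] ω)‖₊ : ℝ≥0)) : ℝ)
        / Real.sqrt n} ⊆ C n ∪ A n ∪ B n := by
    intro n hn1 ω hωE
    rw [Set.mem_setOf_eq] at hωE
    by_contra hnot
    simp only [Set.mem_union, not_or] at hnot
    obtain ⟨⟨hC', hA'⟩, hB'⟩ := hnot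
    have hr0 := hsqrt0 n hn1
    have hMn0 := hM0 n hn1
    have ht4n0 := ht40 n hn1
    -- extract hypotheses
    have hnC : |g ω| ≤ t4 n := by
      have : ω ∉ {ω | t4 n < |g ω|} := hC'
      simpa [Set.mem_setOf_eq, not_lt] using this
    have hcard : ((Finset.range (n+1)).filter
        (fun j => t4 n < |g ((⇑T)^[j] ω)|)).card ≤ D n := by
      have hlt : Nf n ω < ((D n + 1:ℕ):ℝ≥0∞) := by
        have : ω ∉ A n := hA'
        rw [hA_def] at this
        simpa [Set.mem_setOf_eq, not_le] using this
      have heq : Nf n ω = (((Finset.range (n+1)).filter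
          (fun j => t4 n < |g ((⇑T)^[j] ω)|)).card : ℝ≥0∞) := by
        simp only [hNf_def]
        rw [Finset.sum_boole]
      rw [heq] at hlt
      have : ((Finset.range (n+1)).filter
          (fun j => t4 n < |g ((⇑T)^[j] ω)|)).card < D n + 1 := by
        exact_mod_cast hlt
      omega
    have hsumR : ∑ i ∈ Finset.range n, max (|h ((⇑T)^[i] ω)| - M n) 0 ≤ t4 n := by
      have hlt : Sh n ω < ENNReal.ofReal (t4 n) := by
        have : ω ∉ B n := hB'
        rw [hB_def] at this
        simpa [Set.mem_setOf_eq, not_le] using this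
      have heq : Sh n ω = ENNReal.ofReal
          (∑ i ∈ Finset.range n, max (|h ((⇑T)^[i] ω)| - M n) 0) := by
        rw [hSh_def, ENNReal.ofReal_sum_of_nonneg (fun i _ => le_max_right _ _)]
      rw [heq] at hlt
      exact le_of_lt ((ENNReal.ofReal_lt_ofReal_iff_of_nonneg
        (Finset.sum_nonneg fun i _ => le_max_right _ _)).1 hlt)
    -- deterministic bound
    have hdet : ∀ k, k ≤ n → |g ((⇑T)^[k] ω)| ≤ 2 * t4 n + D n * M n := by
      intro k hk
      have h0' : |(fun i => g ((⇑T)^[i] ω)) 0| ≤ t4 n := by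
        simpa using hnC
      have hsum' : ∑ i ∈ Finset.range n,
          max (|(fun i => g ((⇑T)^[i] ω)) i - (fun i => g ((⇑T)^[i] ω)) (i+1)| - M n) 0
          ≤ t4 n := by
        refine le_trans (le_of_eq (Finset.sum_congr rfl fun i _ => ?_)) hsumR
        have : h ((⇑T)^[i] ω) = g ((⇑T)^[i] ω) - g ((⇑T)^[i+1] ω) := by
          rw [hh_def]
          simp [Function.iterate_succ_apply']
        rw [this]
      exact det_aux (fun i => g ((⇑T)^[i] ω)) (t4 n) (M n) hMn0.le n (D n) k hk h0'
        hcard hsum'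
    have hDM : (D n : ℝ) * M n ≤ t4 n := by
      have h1 : (D n:ℝ) ≤ ε/4 * Real.sqrt n ^ (2-p) := by
        rw [hD_def]
        exact Nat.floor_le (by positivity)
      have h2 : M n = Real.sqrt n ^ (p-1) := rfl
      calc (D n:ℝ) * M n ≤ (ε/4 * Real.sqrt n ^ (2-p)) * M n :=
            mul_le_mul_of_nonneg_right h1 hMn0.le
        _ = ε/4 * Real.sqrt n := by
            rw [h2, mul_assoc, ← Real.rpow_add hr0, show (2-p) + (p-1) = (1:ℝ) by ring,
              Real.rpow_one]
        _ = t4 n := rfl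
    -- conclude
    have hsup : ((Finset.Icc 1 n).sup fun k => ‖g ((⇑T)^[k] ω)‖₊ : ℝ≥0)
        ≤ Real.toNNReal (3 * t4 n) := by
      apply Finset.sup_le
      intro k hk
      rw [Finset.mem_Icc] at hk
      have hb := hdet k hk.2
      rw [← NNReal.coe_le_coe, coe_nnnorm, Real.norm_eq_abs,
        Real.coe_toNNReal _ (by positivity)]
      linarith
    have hlt2 : ((((Finset.Icc 1 n).sup fun k => ‖g ((⇑T)^[k] ω)‖₊ : ℝ≥0)) : ℝ)
        / Real.sqrt n < ε := by
      have h2 : ((((Finset.Icc 1 n).sup fun k => ‖g ((⇑T)^[k] ω)‖₊ : ℝ≥0)) : ℝ)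
          ≤ 3 * t4 n := by
        refine le_trans (NNReal.coe_le_coe.2 hsup) ?_
        rw [Real.coe_toNNReal _ (by positivity)]
      rw [div_lt_iff₀ hr0]
      calc ((((Finset.Icc 1 n).sup fun k => ‖g ((⇑T)^[k] ω)‖₊ : ℝ≥0)) : ℝ)
          ≤ 3 * t4 n := h2
        _ = 3 * ε / 4 * Real.sqrt n := by rw [ht4_def]; ring
        _ < ε * Real.sqrt n := by nlinarith
    exact absurd hωE (not_le.2 hlt2)
  -- final assembly
  have l1 : Tendsto (fun n => K1 * a n) atTop (𝓝 0) := by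
    have := ENNReal.Tendsto.const_mul (a := K1) htendA (Or.inr ENNReal.ofReal_ne_top)
    simpa using this
  have l2 : Tendsto (fun n => K2 * dl n) atTop (𝓝 0) := by
    have := ENNReal.Tendsto.const_mul (a := K2) htendD (Or.inr ENNReal.ofReal_ne_top)
    simpa using this
  have hupper : Tendsto (fun n => a n + K1 * a n + K2 * dl n) atTop (𝓝 0) := by
    have := (htendA.add l1).add l2
    simpa using this
  refine tendsto_of_tendsto_of_tendsto_of_le_of_le' tendsto_const_nhds hupper
    (Eventually.of_forall fun n => zero_le) ?_
  filter_upwards [eventually_ge_atTop 1, hC_bound] with n hn1 hCb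
  calc μ {ω | ε ≤ ((((Finset.Icc 1 n).sup fun k => ‖g ((⇑T)^[k] ω)‖₊ : ℝ≥0)) : ℝ)
        / Real.sqrt n}
      ≤ μ (C n ∪ A n ∪ B n) := measure_mono (hE_sub n hn1)
    _ ≤ μ (C n ∪ A n) + μ (B n) := measure_union_le _ _
    _ ≤ (μ (C n) + μ (A n)) + μ (B n) := add_le_add_left (measure_union_le _ _) _
    _ ≤ a n + K1 * a n + K2 * dl n :=
        add_le_add (add_le_add hCb (hA_bound n hn1)) (hB_bound n hn1)
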